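/- arXiv:2101.01809 — 2 statements merged into one kernel-verified Lean document; each statement's English description precedes it below -/
import Mathlib

section
/- Let S be a graded weakly system in a G-graded ring R, and let P be a graded ideal of R that is maximal (under inclusion) among graded ideals of R disjoint from S. Then P is a graded weakly prime ideal of R. -/
/-- The additive subgroup generated by all products `a * b` with `a ∈ S`, `b ∈ T`.
For two-sided ideals `I`, `J`, `mulClosure I J` is the ideal product `IJ`. -/
def mulClosure {R : Type*} [NonUnitalRing R] (S T : Set R) : AddSubgroup R :=
  AddSubgroup.closure {x | ∃ a ∈ S, ∃ b ∈ T, a * b = x}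

/-- A two-sided ideal of a `G`-graded ring is graded if every homogeneous component of
every element of the ideal lies in the ideal. -/
def IsGradedIdeal {G R : Type*} [DecidableEq G] [NonUnitalRing R]
    (𝒜 : G → AddSubgroup R) [DirectSum.Decomposition 𝒜] (P : TwoSidedIdeal R) : Prop :=
  ∀ x ∈ P, ∀ g : G, (DirectSum.decompose 𝒜 x g : R) ∈ P

/-- A proper graded ideal `P` is graded weakly prime if `0 ≠ IJ ⊆ P` implies `I ⊆ P` or
`J ⊆ P` for all graded ideals `I`, `J`. -/
def IsGradedWeaklyPrime {G R : Type*} [DecidableEq G] [NonUnitalRing R]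
    (𝒜 : G → AddSubgroup R) [DirectSum.Decomposition 𝒜] (P : TwoSidedIdeal R) : Prop :=
  P ≠ ⊤ ∧ IsGradedIdeal 𝒜 P ∧
    ∀ I J : TwoSidedIdeal R, IsGradedIdeal 𝒜 I → IsGradedIdeal 𝒜 J →
      mulClosure (I : Set R) (J : Set R) ≠ ⊥ →
      (mulClosure (I : Set R) (J : Set R) : Set R) ⊆ (P : Set R) → I ≤ P ∨ J ≤ P

/-- A nonempty set `S` of nonzero homogeneous elements is a graded weakly system if for
all graded ideals `I`, `J` with `I ∩ S ≠ ∅`, `J ∩ S ≠ ∅` and `IJ ≠ 0`, one has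
`IJ ∩ S ≠ ∅`. -/
def IsGradedWeaklySystem {G R : Type*} [DecidableEq G] [NonUnitalRing R]
    (𝒜 : G → AddSubgroup R) [DirectSum.Decomposition 𝒜] (S : Set R) : Prop :=
  S.Nonempty ∧ (∀ s ∈ S, SetLike.IsHomogeneousElem 𝒜 s) ∧ (0 : R) ∉ S ∧
    ∀ I J : TwoSidedIdeal R, IsGradedIdeal 𝒜 I → IsGradedIdeal 𝒜 J →
      ((I : Set R) ∩ S).Nonempty → ((J : Set R) ∩ S).Nonempty →
      mulClosure (I : Set R) (J : Set R) ≠ ⊥ →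
      ((mulClosure (I : Set R) (J : Set R) : Set R) ∩ S).Nonempty

/-- The sum `P + I` of two two-sided ideals, as a two-sided ideal. -/
def sumIdeal {R : Type*} [NonUnitalRing R] (P I : TwoSidedIdeal R) : TwoSidedIdeal R :=
  TwoSidedIdeal.mk' {x | ∃ p ∈ P, ∃ i ∈ I, p + i = x}
    ⟨0, P.zero_mem, 0, I.zero_mem, by simp⟩
    (fun {x y} ⟨p, hp, i, hi, hx⟩ ⟨q, hq, j, hj, hy⟩ =>
      ⟨p + q, P.add_mem hp hq, i + j, I.add_mem hi hj, by rw [← hx, ← hy]; abel⟩)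
    (fun {x} ⟨p, hp, i, hi, hx⟩ => ⟨-p, P.neg_mem hp, -i, I.neg_mem hi, by rw [← hx]; abel⟩)
    (fun {x y} ⟨p, hp, i, hi, hy⟩ =>
      ⟨x * p, P.mul_mem_left _ _ hp, x * i, I.mul_mem_left _ _ hi, by rw [← hy, mul_add]⟩)
    (fun {x y} ⟨p, hp, i, hi, hx⟩ =>
      ⟨p * y, P.mul_mem_right _ _ hp, i * y, I.mul_mem_right _ _ hi, by rw [← hx, add_mul]⟩)

lemma mem_sumIdeal {R : Type*} [NonUnitalRing R] (P I : TwoSidedIdeal R) (x : R) :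
    x ∈ sumIdeal P I ↔ ∃ p ∈ P, ∃ i ∈ I, p + i = x := by
  simp [sumIdeal]

lemma sumIdeal_graded {G R : Type*} [DecidableEq G] [NonUnitalRing R]
    (𝒜 : G → AddSubgroup R) [DirectSum.Decomposition 𝒜] {P I : TwoSidedIdeal R}
    (hP : IsGradedIdeal 𝒜 P) (hI : IsGradedIdeal 𝒜 I) :
    IsGradedIdeal 𝒜 (sumIdeal P I) := by
  intro x hx g
  rw [mem_sumIdeal] at hx
  obtain ⟨p, hp, i, hi, rfl⟩ := hx
  rw [mem_sumIdeal]
  exact ⟨_, hP p hp g, _, hI i hi g, by simp [DirectSum.decompose_add]⟩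

/-- Let `S` be a graded weakly system and `P` a graded ideal maximal among graded ideals
disjoint from `S`. Then `P` is a graded weakly prime ideal. -/
theorem stmt_10 {G R : Type*} [Group G] [DecidableEq G] [NonUnitalRing R]
    (𝒜 : G → AddSubgroup R) [DirectSum.Decomposition 𝒜]
    (hmul : ∀ ⦃g h : G⦄ ⦃x y : R⦄, x ∈ 𝒜 g → y ∈ 𝒜 h → x * y ∈ 𝒜 (g * h))
    (S : Set R) (hS : IsGradedWeaklySystem 𝒜 S)
    (P : TwoSidedIdeal R) (hP : IsGradedIdeal 𝒜 P) (hdisj : (P : Set R) ∩ S = ∅)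
    (hmax : ∀ Q : TwoSidedIdeal R, IsGradedIdeal 𝒜 Q → (Q : Set R) ∩ S = ∅ → P ≤ Q →
      P = Q) :
    IsGradedWeaklyPrime 𝒜 P := by

  obtain ⟨⟨s, hs⟩, hShom, hS0, hSsys⟩ := hS
  refine ⟨?_, hP, ?_⟩
  · intro h
    have : s ∈ (P : Set R) ∩ S := ⟨by simp [h], hs⟩
    rw [hdisj] at this
    exact this
  · intro I J hI hJ hne hsub
    by_contra hcon
    push_neg at hcon
    obtain ⟨hIP, hJP⟩ := hcon
    set Q1 := sumIdeal P I with hQ1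
    set Q2 := sumIdeal P J with hQ2
    have hPQ1 : P ≤ Q1 := fun x hx => (mem_sumIdeal P I x).2 ⟨x, hx, 0, I.zero_mem, by simp⟩
    have hPQ2 : P ≤ Q2 := fun x hx => (mem_sumIdeal P J x).2 ⟨x, hx, 0, J.zero_mem, by simp⟩
    have hIQ1 : I ≤ Q1 := fun x hx => (mem_sumIdeal P I x).2 ⟨0, P.zero_mem, x, hx, by simp⟩
    have hJQ2 : J ≤ Q2 := fun x hx => (mem_sumIdeal P J x).2 ⟨0, P.zero_mem, x, hx, by simp⟩
    have hgQ1 : IsGradedIdeal 𝒜 Q1 := sumIdeal_graded 𝒜 hP hI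
    have hgQ2 : IsGradedIdeal 𝒜 Q2 := sumIdeal_graded 𝒜 hP hJ
    -- Q1 meets S
    have hmeet : ∀ (K Q : TwoSidedIdeal R), IsGradedIdeal 𝒜 Q → K ≤ Q → ¬ K ≤ P → P ≤ Q →
        ((Q : Set R) ∩ S).Nonempty := by
      intro K Q hgQ hKQ hKP hPQ
      rw [Set.nonempty_iff_ne_empty]
      intro hemp
      exact hKP (fun x hx => (hmax Q hgQ hemp hPQ) ▸ hKQ hx)
    have hne1 : ((Q1 : Set R) ∩ S).Nonempty := hmeet I Q1 hgQ1 hIQ1 hIP hPQ1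
    have hne2 : ((Q2 : Set R) ∩ S).Nonempty := hmeet J Q2 hgQ2 hJQ2 hJP hPQ2
    -- product nonzero
    have hmono : mulClosure (I : Set R) (J : Set R) ≤ mulClosure (Q1 : Set R) (Q2 : Set R) := by
      apply AddSubgroup.closure_mono
      rintro x ⟨a, ha, b, hb, rfl⟩
      exact ⟨a, hIQ1 ha, b, hJQ2 hb, rfl⟩
    have hne' : mulClosure (Q1 : Set R) (Q2 : Set R) ≠ ⊥ := by
      intro h
      exact hne (le_antisymm (h ▸ hmono) bot_le)
    -- product contained in P
    have hprodP : (mulClosure (Q1 : Set R) (Q2 : Set R) : Set R) ⊆ (P : Set R) := by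
      intro x hx
      induction hx using AddSubgroup.closure_induction with
      | mem x hx =>
        obtain ⟨a, ha, b, hb, rfl⟩ := hx
        obtain ⟨p, hp, i, hi, rfl⟩ := (mem_sumIdeal P I a).1 ha
        obtain ⟨q, hq, j, hj, rfl⟩ := (mem_sumIdeal P J b).1 hb
        have h1 : (p + i) * (q + j) = (p * q + p * j + i * q) + i * j := by rw [add_mul, mul_add, mul_add]; abel
        rw [SetLike.mem_coe, h1]
        refine P.add_mem (P.add_mem (P.add_mem ?_ ?_) ?_) ?_
        · exact P.mul_mem_right _ _ hp
        · exact P.mul_mem_right _ _ hp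
        · exact P.mul_mem_left _ _ hq
        · exact hsub (AddSubgroup.subset_closure ⟨i, hi, j, hj, rfl⟩)
      | zero => exact P.zero_mem
      | add x y _ _ hx hy => exact P.add_mem hx hy
      | neg x _ hx => exact P.neg_mem hx
    obtain ⟨x, hx1, hx2⟩ := hSsys Q1 Q2 hgQ1 hgQ2 hne1 hne2 hne'
    have : x ∈ (P : Set R) ∩ S := ⟨hprodP hx1, hx2⟩
    rw [hdisj] at this
    exact this
end

section
/- Let I be a graded ideal of a G-graded ring R and suppose some graded weakly prime ideal of R contains I. Then GW(I) = {a ∈ h(R) : every graded weakly system containing a meets I} equals the set of homogeneous elements of the intersection of all graded weakly prime ideals of R containing I; that is, for a ∈ h(R), a ∈ GW(I) if and only if a belongs to every graded weakly prime ideal of R containing I. -/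
open DirectSum

lemma comp_sum_mem {G R : Type*} [DecidableEq G] [NonUnitalRing R]
    (𝒜 : G → AddSubgroup R) [DirectSum.Decomposition 𝒜] (A : AddSubgroup R)
    {ι : Type*} (s : Finset ι) (f : ι → R)
    (h : ∀ i ∈ s, f i ∈ A ∧ SetLike.IsHomogeneousElem 𝒜 (f i)) (g : G) :
    (DirectSum.decompose 𝒜 (∑ i ∈ s, f i) g : R) ∈ A := by
  classical
  induction s using Finset.cons_induction with
  | empty => simpa using A.zero_mem
  | cons a s hi ih =>
    rw [Finset.sum_cons, decompose_add]
    rw [DirectSum.add_apply, AddSubgroup.coe_add]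
    refine A.add_mem ?_ (ih fun i hi => h i (Finset.mem_cons_of_mem hi))
    obtain ⟨hfa, m, hm⟩ := h a (Finset.mem_cons_self a s)
    by_cases hmg : m = g
    · subst hmg; rw [decompose_of_mem_same 𝒜 hm]; exact hfa
    · rw [decompose_of_mem_ne 𝒜 hm hmg]; exact A.zero_mem

lemma comp_mulClosure_mem {G R : Type*} [Group G] [DecidableEq G] [NonUnitalRing R]
    (𝒜 : G → AddSubgroup R) [DirectSum.Decomposition 𝒜]
    (hmul : ∀ ⦃g h : G⦄ ⦃x y : R⦄, x ∈ 𝒜 g → y ∈ 𝒜 h → x * y ∈ 𝒜 (g * h))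
    {I J : TwoSidedIdeal R} (hI : IsGradedIdeal 𝒜 I) (hJ : IsGradedIdeal 𝒜 J)
    {x : R} (hx : x ∈ mulClosure (I : Set R) (J : Set R)) (g : G) :
    (DirectSum.decompose 𝒜 x g : R) ∈ mulClosure (I : Set R) (J : Set R) := by
  classical
  induction hx using AddSubgroup.closure_induction with
  | mem x hx =>
    obtain ⟨a, ha, b, hb, rfl⟩ := hx
    rw [← DirectSum.sum_support_decompose 𝒜 a, ← DirectSum.sum_support_decompose 𝒜 b,
      Finset.sum_mul_sum, ← Finset.sum_product']
    refine comp_sum_mem 𝒜 _ _ _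
      (fun p _ => ⟨?_, p.1 * p.2, hmul (SetLike.coe_mem _) (SetLike.coe_mem _)⟩) g
    exact AddSubgroup.subset_closure ⟨_, hI a ha p.1, _, hJ b hb p.2, rfl⟩
  | zero => simpa using AddSubgroup.zero_mem _
  | add x y _ _ ihx ihy =>
    rw [decompose_add, DirectSum.add_apply, AddSubgroup.coe_add]
    exact AddSubgroup.add_mem _ ihx ihy
  | neg x _ ihx =>
    rw [decompose_neg]
    simp only [DFinsupp.neg_apply, AddSubgroup.coe_neg]
    exact AddSubgroup.neg_mem _ ihx


/-- Let `I` be a graded ideal contained in some graded weakly prime ideal. Then for every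
homogeneous `a`, `a ∈ GW(I)` (every graded weakly system containing `a` meets `I`) iff `a`
belongs to every graded weakly prime ideal containing `I`. -/
theorem stmt_11 {G R : Type*} [Group G] [DecidableEq G] [NonUnitalRing R]
    (𝒜 : G → AddSubgroup R) [DirectSum.Decomposition 𝒜]
    (hmul : ∀ ⦃g h : G⦄ ⦃x y : R⦄, x ∈ 𝒜 g → y ∈ 𝒜 h → x * y ∈ 𝒜 (g * h))
    (I : TwoSidedIdeal R) (hI : IsGradedIdeal 𝒜 I)
    (hex : ∃ P : TwoSidedIdeal R, IsGradedWeaklyPrime 𝒜 P ∧ I ≤ P) :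
    ∀ a : R, SetLike.IsHomogeneousElem 𝒜 a →
      ((∀ S : Set R, IsGradedWeaklySystem 𝒜 S → a ∈ S → (S ∩ (I : Set R)).Nonempty) ↔
        ∀ P : TwoSidedIdeal R, IsGradedWeaklyPrime 𝒜 P → I ≤ P → a ∈ P) := by
  classical
  intro a ha
  constructor
  · -- easy direction: complement of P
    intro hGW P hP hIP
    by_contra haP
    obtain ⟨hPtop, hPgr, hPpr⟩ := hP
    set S₀ : Set R := {s | SetLike.IsHomogeneousElem 𝒜 s ∧ s ∉ P} with hS₀
    have hsys : IsGradedWeaklySystem 𝒜 S₀ := by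
      refine ⟨?_, fun s hs => hs.1, fun h => h.2 P.zero_mem, ?_⟩
      · -- nonempty
        obtain ⟨x, hx⟩ : ∃ x : R, x ∉ P := by
          by_contra h
          push_neg at h
          exact hPtop (SetLike.ext fun y => ⟨fun _ => trivial, fun _ => h y⟩)
        obtain ⟨g, hg⟩ : ∃ g : G, (decompose 𝒜 x g : R) ∉ P := by
          by_contra h
          push_neg at h
          refine hx ?_
          rw [← DirectSum.sum_support_decompose 𝒜 x]
          exact sum_mem fun g _ => h g
        exact ⟨_, ⟨g, SetLike.coe_mem _⟩, hg⟩
      · intro I' J' hI' hJ' hIS hJS hne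
        by_contra hempty
        rw [Set.not_nonempty_iff_eq_empty] at hempty
        have hsub : (mulClosure (I' : Set R) (J' : Set R) : Set R) ⊆ (P : Set R) := by
          intro x hx
          have hcomp : ∀ g, (decompose 𝒜 x g : R) ∈ P := by
            intro g
            by_contra hg
            have hmem : (decompose 𝒜 x g : R) ∈ mulClosure (I' : Set R) (J' : Set R) :=
              comp_mulClosure_mem 𝒜 hmul hI' hJ' hx g
            have : (decompose 𝒜 x g : R) ∈
                (mulClosure (I' : Set R) (J' : Set R) : Set R) ∩ S₀ :=
              ⟨hmem, ⟨g, SetLike.coe_mem _⟩, hg⟩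
            rw [hempty] at this
            exact this
          have : x ∈ P := by
            rw [← DirectSum.sum_support_decompose 𝒜 x]
            exact sum_mem fun g _ => hcomp g
          exact this
        rcases hPpr I' J' hI' hJ' hne hsub with h | h
        · obtain ⟨s, hsI, _, hsP⟩ := hIS
          exact hsP (h hsI)
        · obtain ⟨s, hsJ, _, hsP⟩ := hJS
          exact hsP (h hsJ)
    obtain ⟨s, hsS, hsI⟩ := hGW S₀ hsys ⟨ha, haP⟩
    exact hsS.2 (hIP hsI)
  · -- hard direction: Zorn
    intro hall S hS haS
    by_contra hne
    rw [Set.not_nonempty_iff_eq_empty] at hne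
    set 𝒞 : Set (Set R) := {T | (I : Set R) ⊆ T ∧ T ∩ S = ∅ ∧ (0 : R) ∈ T ∧
      (∀ x y : R, x ∈ T → y ∈ T → x + y ∈ T) ∧ (∀ x : R, x ∈ T → -x ∈ T) ∧
      (∀ x y : R, y ∈ T → x * y ∈ T) ∧ (∀ x y : R, x ∈ T → x * y ∈ T) ∧
      (∀ x ∈ T, ∀ g : G, (decompose 𝒜 x g : R) ∈ T)} with h𝒞
    have hIC : (I : Set R) ∈ 𝒞 := by
      refine ⟨subset_rfl, by rw [Set.inter_comm] at hne; exact hne, I.zero_mem,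
        fun x y hx hy => I.add_mem hx hy, fun x hx => I.neg_mem hx,
        fun x y hy => I.mul_mem_left x y hy, fun x y hx => I.mul_mem_right x y hx,
        hI⟩
    have hub : ∀ c ⊆ 𝒞, IsChain (· ⊆ ·) c → c.Nonempty →
        ∃ ub ∈ 𝒞, ∀ s ∈ c, s ⊆ ub := by
      intro c hc hchain hcne
      refine ⟨⋃₀ c, ⟨?_, ?_, ?_, ?_, ?_, ?_, ?_, ?_⟩, fun s hs => Set.subset_sUnion_of_mem hs⟩
      · obtain ⟨T, hT⟩ := hcne
        exact (hc hT).1.trans (Set.subset_sUnion_of_mem hT)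
      · rw [Set.eq_empty_iff_forall_notMem]
        rintro x ⟨⟨T, hT, hxT⟩, hxS⟩
        exact Set.eq_empty_iff_forall_notMem.mp (hc hT).2.1 x ⟨hxT, hxS⟩
      · obtain ⟨T, hT⟩ := hcne
        exact ⟨T, hT, (hc hT).2.2.1⟩
      · rintro x y ⟨T1, hT1, hx⟩ ⟨T2, hT2, hy⟩
        rcases hchain.total hT1 hT2 with h | h
        · exact ⟨T2, hT2, (hc hT2).2.2.2.1 x y (h hx) hy⟩
        · exact ⟨T1, hT1, (hc hT1).2.2.2.1 x y hx (h hy)⟩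
      · rintro x ⟨T, hT, hx⟩
        exact ⟨T, hT, (hc hT).2.2.2.2.1 x hx⟩
      · rintro x y ⟨T, hT, hy⟩
        exact ⟨T, hT, (hc hT).2.2.2.2.2.1 x y hy⟩
      · rintro x y ⟨T, hT, hx⟩
        exact ⟨T, hT, (hc hT).2.2.2.2.2.2.1 x y hx⟩
      · rintro x ⟨T, hT, hx⟩ g
        exact ⟨T, hT, (hc hT).2.2.2.2.2.2.2 x hx g⟩
    obtain ⟨M, hIM, hMmax⟩ := zorn_subset_nonempty 𝒞 hub _ hIC
    obtain ⟨hIM', hMS, h0, hadd, hneg, hml, hmr, hgr⟩ := hMmax.1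
    set P : TwoSidedIdeal R := TwoSidedIdeal.mk' M h0
      (fun {x y} hx hy => hadd x y hx hy) (fun {x} hx => hneg x hx)
      (fun {x y} hy => hml x y hy) (fun {x y} hx => hmr x y hx) with hP
    have hmemP : ∀ x : R, x ∈ P ↔ x ∈ M := fun x => TwoSidedIdeal.mem_mk' _ _ _ _ _ _ x
    have haM : a ∉ M := fun h => Set.eq_empty_iff_forall_notMem.mp hMS a ⟨h, haS⟩
    have hPwp : IsGradedWeaklyPrime 𝒜 P := by
      refine ⟨?_, ?_, ?_⟩
      · intro h
        exact haM ((hmemP a).mp (h ▸ (trivial : a ∈ (⊤ : TwoSidedIdeal R))))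
      · intro x hx g
        rw [hmemP] at *
        exact hgr x hx g
      · intro I' J' hI' hJ' hne' hsub
        by_contra hcon
        push_neg at hcon
        obtain ⟨hc1, hc2⟩ := hcon
        obtain ⟨i, hiI', hiP⟩ := SetLike.not_le_iff_exists.mp hc1
        obtain ⟨j, hjJ', hjP⟩ := SetLike.not_le_iff_exists.mp hc2
        -- the enlarged sets
        set T1 : Set R := {x | ∃ p ∈ M, ∃ q ∈ I', p + q = x} with hT1
        set T2 : Set R := {x | ∃ p ∈ M, ∃ q ∈ J', p + q = x} with hT2
        have hMT1 : M ⊆ T1 := fun p hp => ⟨p, hp, 0, I'.zero_mem, add_zero p⟩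
        have hMT2 : M ⊆ T2 := fun p hp => ⟨p, hp, 0, J'.zero_mem, add_zero p⟩
        have hI'T1 : (I' : Set R) ⊆ T1 := fun q hq => ⟨0, h0, q, hq, zero_add q⟩
        have hJ'T2 : (J' : Set R) ⊆ T2 := fun q hq => ⟨0, h0, q, hq, zero_add q⟩
        -- T1 meets S
        have hT1S : (T1 ∩ S).Nonempty := by
          by_contra h
          rw [Set.not_nonempty_iff_eq_empty] at h
          have hT1C : T1 ∈ 𝒞 := by
            refine ⟨hIM.trans hMT1, h, hMT1 h0, ?_, ?_, ?_, ?_, ?_⟩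
            · rintro x y ⟨p, hp, q, hq, rfl⟩ ⟨p', hp', q', hq', rfl⟩
              exact ⟨p + p', hadd _ _ hp hp', q + q', I'.add_mem hq hq', by abel⟩
            · rintro x ⟨p, hp, q, hq, rfl⟩
              exact ⟨-p, hneg _ hp, -q, I'.neg_mem hq, by abel⟩
            · rintro x y ⟨p, hp, q, hq, rfl⟩
              exact ⟨x * p, hml _ _ hp, x * q, I'.mul_mem_left _ _ hq, (mul_add x p q).symm⟩
            · rintro x y ⟨p, hp, q, hq, rfl⟩
              exact ⟨p * y, hmr _ _ hp, q * y, I'.mul_mem_right _ _ hq, (add_mul p q y).symm⟩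
            · rintro x ⟨p, hp, q, hq, rfl⟩ g
              rw [decompose_add, DirectSum.add_apply, AddSubgroup.coe_add]
              exact ⟨_, hgr p hp g, _, hI' q hq g, rfl⟩
          have := hMmax.2 hT1C hMT1
          exact hiP ((hmemP i).mpr (this (hI'T1 hiI')))
        have hT2S : (T2 ∩ S).Nonempty := by
          by_contra h
          rw [Set.not_nonempty_iff_eq_empty] at h
          have hT2C : T2 ∈ 𝒞 := by
            refine ⟨hIM.trans hMT2, h, hMT2 h0, ?_, ?_, ?_, ?_, ?_⟩
            · rintro x y ⟨p, hp, q, hq, rfl⟩ ⟨p', hp', q', hq', rfl⟩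
              exact ⟨p + p', hadd _ _ hp hp', q + q', J'.add_mem hq hq', by abel⟩
            · rintro x ⟨p, hp, q, hq, rfl⟩
              exact ⟨-p, hneg _ hp, -q, J'.neg_mem hq, by abel⟩
            · rintro x y ⟨p, hp, q, hq, rfl⟩
              exact ⟨x * p, hml _ _ hp, x * q, J'.mul_mem_left _ _ hq, (mul_add x p q).symm⟩
            · rintro x y ⟨p, hp, q, hq, rfl⟩
              exact ⟨p * y, hmr _ _ hp, q * y, J'.mul_mem_right _ _ hq, (add_mul p q y).symm⟩
            · rintro x ⟨p, hp, q, hq, rfl⟩ g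
              rw [decompose_add, DirectSum.add_apply, AddSubgroup.coe_add]
              exact ⟨_, hgr p hp g, _, hJ' q hq g, rfl⟩
          have := hMmax.2 hT2C hMT2
          exact hjP ((hmemP j).mpr (this (hJ'T2 hjJ')))
        -- the graded two-sided ideals with carriers T1, T2
        set K1 : TwoSidedIdeal R := TwoSidedIdeal.mk' T1 (hMT1 h0)
          (fun {x y} hx hy => by
            obtain ⟨p, hp, q, hq, rfl⟩ := hx; obtain ⟨p', hp', q', hq', rfl⟩ := hy
            exact ⟨p + p', hadd _ _ hp hp', q + q', I'.add_mem hq hq', by abel⟩)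
          (fun {x} hx => by
            obtain ⟨p, hp, q, hq, rfl⟩ := hx
            exact ⟨-p, hneg _ hp, -q, I'.neg_mem hq, by abel⟩)
          (fun {x y} hy => by
            obtain ⟨p, hp, q, hq, rfl⟩ := hy
            exact ⟨x * p, hml _ _ hp, x * q, I'.mul_mem_left _ _ hq, (mul_add x p q).symm⟩)
          (fun {x y} hx => by
            obtain ⟨p, hp, q, hq, rfl⟩ := hx
            exact ⟨p * y, hmr _ _ hp, q * y, I'.mul_mem_right _ _ hq, (add_mul p q y).symm⟩)
          with hK1
        set K2 : TwoSidedIdeal R := TwoSidedIdeal.mk' T2 (hMT2 h0)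
          (fun {x y} hx hy => by
            obtain ⟨p, hp, q, hq, rfl⟩ := hx; obtain ⟨p', hp', q', hq', rfl⟩ := hy
            exact ⟨p + p', hadd _ _ hp hp', q + q', J'.add_mem hq hq', by abel⟩)
          (fun {x} hx => by
            obtain ⟨p, hp, q, hq, rfl⟩ := hx
            exact ⟨-p, hneg _ hp, -q, J'.neg_mem hq, by abel⟩)
          (fun {x y} hy => by
            obtain ⟨p, hp, q, hq, rfl⟩ := hy
            exact ⟨x * p, hml _ _ hp, x * q, J'.mul_mem_left _ _ hq, (mul_add x p q).symm⟩)
          (fun {x y} hx => by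
            obtain ⟨p, hp, q, hq, rfl⟩ := hx
            exact ⟨p * y, hmr _ _ hp, q * y, J'.mul_mem_right _ _ hq, (add_mul p q y).symm⟩)
          with hK2
        have hK1coe : (K1 : Set R) = T1 := TwoSidedIdeal.coe_mk' _ _ _ _ _ _
        have hK2coe : (K2 : Set R) = T2 := TwoSidedIdeal.coe_mk' _ _ _ _ _ _
        have hK1gr : IsGradedIdeal 𝒜 K1 := by
          intro x hx g
          rw [TwoSidedIdeal.mem_mk'] at hx ⊢
          obtain ⟨p, hp, q, hq, rfl⟩ := hx
          rw [decompose_add, DirectSum.add_apply, AddSubgroup.coe_add]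
          exact ⟨_, hgr p hp g, _, hI' q hq g, rfl⟩
        have hK2gr : IsGradedIdeal 𝒜 K2 := by
          intro x hx g
          rw [TwoSidedIdeal.mem_mk'] at hx ⊢
          obtain ⟨p, hp, q, hq, rfl⟩ := hx
          rw [decompose_add, DirectSum.add_apply, AddSubgroup.coe_add]
          exact ⟨_, hgr p hp g, _, hJ' q hq g, rfl⟩
        have hmono : mulClosure (I' : Set R) (J' : Set R) ≤
            mulClosure (K1 : Set R) (K2 : Set R) := by
          apply AddSubgroup.closure_mono
          rintro x ⟨u, hu, v, hv, rfl⟩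
          exact ⟨u, by rw [hK1coe]; exact hI'T1 hu, v, by rw [hK2coe]; exact hJ'T2 hv, rfl⟩
        have hKne : mulClosure (K1 : Set R) (K2 : Set R) ≠ ⊥ := by
          intro h
          exact hne' (le_bot_iff.mp (h ▸ hmono))
        have hK1Snon : ((K1 : Set R) ∩ S).Nonempty := by rw [hK1coe]; exact hT1S
        have hK2Snon : ((K2 : Set R) ∩ S).Nonempty := by rw [hK2coe]; exact hT2S
        have hKM : ∀ w, w ∈ mulClosure (K1 : Set R) (K2 : Set R) → w ∈ M := by
          intro w hw
          induction hw using AddSubgroup.closure_induction with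
          | mem x hx =>
            obtain ⟨u, hu, v, hv, rfl⟩ := hx
            rw [hK1coe] at hu; rw [hK2coe] at hv
            obtain ⟨p, hp, q, hq, rfl⟩ := hu
            obtain ⟨p', hp', q', hq', rfl⟩ := hv
            have h1 : p * p' ∈ M := hmr _ _ hp
            have h2 : p * q' ∈ M := hmr _ _ hp
            have h3 : q * p' ∈ M := hml _ _ hp'
            have h4 : q * q' ∈ M := by
              have : q * q' ∈ mulClosure (I' : Set R) (J' : Set R) :=
                AddSubgroup.subset_closure ⟨q, hq, q', hq', rfl⟩
              exact (hmemP _).mp (hsub this)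
            have heq : (p + q) * (p' + q') = p * p' + p * q' + (q * p' + q * q') := by
              rw [add_mul, mul_add, mul_add]
            rw [heq]
            exact hadd _ _ (hadd _ _ h1 h2) (hadd _ _ h3 h4)
          | zero => exact h0
          | add x y _ _ ihx ihy => exact hadd _ _ ihx ihy
          | neg x _ ihx => exact hneg _ ihx
        obtain ⟨z, hz, hzS⟩ := hS.2.2.2 K1 K2 hK1gr hK2gr hK1Snon hK2Snon hKne
        exact Set.eq_empty_iff_forall_notMem.mp hMS z ⟨hKM z hz, hzS⟩
    have hIleP : I ≤ P := fun x hx => (hmemP x).mpr (hIM hx)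
    exact haM ((hmemP a).mp (hall P hPwp hIleP))
end
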